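/- Let R be a fuzzy equivalence relation on a set U (reflexive, symmetric, and min-transitive: min(μ_R(x,y), μ_R(y,z)) ≤ μ_R(x,z)) whose membership function takes only the values 0, 1/2, and 1. Then for any subset A ⊆ U and any x ∈ U, the lower approximation satisfies: μ_{[A]_R}(x) = 1 if x ∈ A_S, μ_{[A]_R}(x) = 1/2 if x ∈ A_E \ A_S, and μ_{[A]_R}(x) = 0 if x ∉ A_E. -/
import Mathlib


open unitInterval

noncomputable section

instance : Fact ((0:ℝ) ≤ 1) := ⟨zero_le_one⟩

/-- A t-norm on the unit interval: commutative, associative, monotone in each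
argument, with `1` as unit. -/
def IsTnorm (T : I → I → I) : Prop :=
  (∀ x y, T x y = T y x) ∧
  (∀ x y z, T (T x y) z = T x (T y z)) ∧
  (∀ x₁ x₂ y, x₁ ≤ x₂ → T x₁ y ≤ T x₂ y) ∧
  (∀ x y₁ y₂, y₁ ≤ y₂ → T x y₁ ≤ T x y₂) ∧
  (∀ x, T x 1 = x)

/-- A fuzzy `T`-equivalence: reflexive, symmetric, `T`-transitive fuzzy relation. -/
def IsFuzzyTEquiv {U : Type*} (T : I → I → I) (μ : U → U → I) : Prop :=
  (∀ x, μ x x = 1) ∧ (∀ x y, μ x y = μ y x) ∧ (∀ x y z, T (μ x y) (μ y z) ≤ μ x z)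

/-- Fuzzy upper approximation of a crisp set `A`: `sup {μ x y | y ∈ A}` (`sup ∅ = 0`). -/
def upperApp {U : Type*} (μ : U → U → I) (A : Set U) (x : U) : I := sSup (μ x '' A)

/-- Fuzzy lower approximation of a crisp set `A`: `inf {1 - μ x y | y ∉ A}` (`inf ∅ = 1`). -/
def lowerApp {U : Type*} (μ : U → U → I) (A : Set U) (x : U) : I :=
  sInf ((fun y => σ (μ x y)) '' Aᶜ)

/-- The spectrum of a fuzzy relation. -/
def fuzzySpectrum {U : Type*} (μ : U → U → I) : Set I := {r | ∃ x y, μ x y = r}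

/-- `R` has a dually well-ordered spectrum: every nonempty subset of the
spectrum has a greatest element. -/
def DuallyWellOrdered {U : Type*} (μ : U → U → I) : Prop :=
  ∀ s ⊆ fuzzySpectrum μ, s.Nonempty → ∃ m ∈ s, ∀ r ∈ s, r ≤ m

/-- Upper approximation by the crisp equivalence `E = {(x,y) | μ x y = 1}`. -/
def upperE {U : Type*} (μ : U → U → I) (A : Set U) : Set U :=
  {x | ({y | μ x y = 1} ∩ A).Nonempty}

/-- Lower approximation by the crisp equivalence `E = {(x,y) | μ x y = 1}`. -/
def lowerE {U : Type*} (μ : U → U → I) (A : Set U) : Set U :=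
  {x | {y | μ x y = 1} ⊆ A}

/-- Upper approximation by the support relation `S = {(x,y) | μ x y > 0}`. -/
def upperS {U : Type*} (μ : U → U → I) (A : Set U) : Set U :=
  {x | ({y | 0 < μ x y} ∩ A).Nonempty}

/-- Lower approximation by the support relation `S = {(x,y) | μ x y > 0}`. -/
def lowerS {U : Type*} (μ : U → U → I) (A : Set U) : Set U :=
  {x | {y | 0 < μ x y} ⊆ A}

/-- for a three-valued (0, 1/2, 1) fuzzy equivalence (min-transitive),
the lower approximation is 1 on `A_S`, 1/2 on `A_E \\ A_S`, and 0 outside `A_E`. -/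
theorem stmt16 {U : Type*} (μ : U → U → I)
    (hrefl : ∀ x, μ x x = 1) (hsymm : ∀ x y, μ x y = μ y x)
    (htrans : ∀ x y z, min (μ x y) (μ y z) ≤ μ x z)
    (hval : ∀ x y, μ x y = 0 ∨ μ x y = (⟨1/2, by norm_num⟩ : I) ∨ μ x y = 1) :
    ∀ (A : Set U) (x : U),
      (x ∈ lowerS μ A → lowerApp μ A x = 1) ∧
      (x ∈ lowerE μ A \ lowerS μ A → lowerApp μ A x = (⟨1/2, by norm_num⟩ : I)) ∧
      (x ∉ lowerE μ A → lowerApp μ A x = 0) := by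
  intro A x
  have hσhalf : σ (⟨1/2, by norm_num⟩ : I) = (⟨1/2, by norm_num⟩ : I) := by
    ext; simp [unitInterval.coe_symm_eq]; norm_num
  refine ⟨?_, ?_, ?_⟩
  · intro hx
    refine le_antisymm le_one' (le_sInf ?_)
    rintro b ⟨y, hy, rfl⟩
    have h0 : μ x y = 0 := by
      by_contra h
      exact hy (hx (lt_of_le_of_ne unitInterval.nonneg' (Ne.symm h)))
    show (1:I) ≤ σ (μ x y)
    rw [h0, unitInterval.symm_zero]
  · rintro ⟨hE, hS⟩
    simp only [lowerS, Set.mem_setOf_eq, Set.not_subset] at hS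
    obtain ⟨y, hy, hyA⟩ := hS
    have hy1 : μ x y ≠ 1 := fun h => hyA (hE h)
    have hyh : μ x y = (⟨1/2, by norm_num⟩ : I) := by
      rcases hval x y with h | h | h
      · exact absurd h hy.ne'
      · exact h
      · exact absurd h hy1
    refine le_antisymm ?_ (le_sInf ?_)
    · calc lowerApp μ A x ≤ σ (μ x y) := sInf_le ⟨y, hyA, rfl⟩
        _ = _ := by rw [hyh, hσhalf]
    · rintro b ⟨z, hz, rfl⟩
      show (⟨1/2, by norm_num⟩ : I) ≤ σ (μ x z)
      have hz1 : μ x z ≠ 1 := fun h => hz (hE h)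
      rcases hval x z with h | h | h
      · rw [h, unitInterval.symm_zero]; exact le_one'
      · rw [h, hσhalf]
      · exact absurd h hz1
  · intro hE
    simp only [lowerE, Set.mem_setOf_eq, Set.not_subset] at hE
    obtain ⟨y, hy1, hyA⟩ := hE
    have : lowerApp μ A x ≤ σ (μ x y) := sInf_le ⟨y, hyA, rfl⟩
    rw [hy1, unitInterval.symm_one] at this
    exact le_antisymm this (lowerApp μ A x).2.1
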